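/- Let (h_n), (h̄_n) and (a_n) be sequences of nonnegative real numbers and let C > 0 and α ≥ 0. Assume that for all r, r̄ ∈ [0,1) the family (a_n · r^{h_n} · r̄^{h̄_n})_n is summable with ∑_n a_n · r^{h_n} · r̄^{h̄_n} ≤ C·(1−r)^{−α}·(1−r̄)^{−α}. Then for every Schwartz function φ : ℝ² → ℂ: (i) the family (a_n · ∫_{ℝ²} exp(i·h_n·θ + i·h̄_n·θ̄)·φ(θ,θ̄) dθ dθ̄)_n is summable; and (ii) the double integral ∫_{ℝ²} (∑'_n a_n · r^{h_n} · r̄^{h̄_n} · exp(i·h_n·θ + i·h̄_n·θ̄)) · φ(θ,θ̄) dθ dθ̄ tends to ∑'_n a_n · ∫_{ℝ²} exp(i·h_n·θ + i·h̄_n·θ̄)·φ(θ,θ̄) dθ dθ̄ in the joint limit r → 1⁻, r̄ → 1⁻. -/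

import Mathlib

open MeasureTheory Filter Real Complex Topology
open scoped FourierTransform RealInnerProductSpace

noncomputable section

namespace CBAux

lemma schwartz_decay_bound {V : Type*} [NormedAddCommGroup V] [NormedSpace ℝ V]
    (f : SchwartzMap V ℂ) (k : ℕ) :
    ∃ D : ℝ, 0 ≤ D ∧ ∀ x, (1 + ‖x‖) ^ k * ‖f x‖ ≤ D := by
  refine ⟨2 ^ k * ((Finset.Iic (k, 0)).sup (fun m => SchwartzMap.seminorm ℝ m.1 m.2)) f,
    mul_nonneg (by positivity) (apply_nonneg _ f), fun x => ?_⟩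
  have := SchwartzMap.one_add_le_sup_seminorm_apply (𝕜 := ℝ) (m := (k, 0)) le_rfl le_rfl f x
  simpa [norm_iteratedFDeriv_zero] using this

lemma fourier_decay (φ : SchwartzMap (ℝ × ℝ) ℂ) (k : ℕ) :
    ∃ D : ℝ, 0 ≤ D ∧ ∀ s t : ℝ, 0 ≤ s → 0 ≤ t →
      ‖∫ p : ℝ × ℝ, Complex.exp (Complex.I * s * p.1 + Complex.I * t * p.2) * φ p‖
        ≤ D * ((1 + s + t) ^ k)⁻¹ := by
  set L : EuclideanSpace ℝ (Fin 2) ≃L[ℝ] ℝ × ℝ :=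
    (EuclideanSpace.equiv (Fin 2) ℝ).trans (ContinuousLinearEquiv.finTwoArrow ℝ ℝ) with hL
  set ψ : SchwartzMap (EuclideanSpace ℝ (Fin 2)) ℂ :=
    SchwartzMap.compCLMOfContinuousLinearEquiv ℝ L φ with hψ
  set χ := SchwartzMap.fourierTransformCLM ℝ ψ with hχ
  obtain ⟨D0, hD0, hbd⟩ := schwartz_decay_bound χ k
  have hπ : (0:ℝ) < π := Real.pi_pos
  refine ⟨(4 * π) ^ k * D0, by positivity, fun s t hs ht => ?_⟩
  set ξ : EuclideanSpace ℝ (Fin 2) :=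
    (WithLp.equiv 2 (Fin 2 → ℝ)).symm ![-(s / (2 * π)), -(t / (2 * π))] with hξ
  have hξ0 : ξ 0 = -(s / (2 * π)) := rfl
  have hξ1 : ξ 1 = -(t / (2 * π)) := rfl
  have mpL : MeasurePreserving (⇑L) volume volume := by
    have h1 := PiLp.volume_preserving_ofLp (Fin 2)
    have h2 := MeasureTheory.volume_preserving_finTwoArrow ℝ
    have hfe : ⇑L = (⇑(MeasurableEquiv.finTwoArrow : (Fin 2 → ℝ) ≃ᵐ ℝ × ℝ)) ∘
        (@WithLp.ofLp 2 (Fin 2 → ℝ)) := rfl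
    rw [hfe]; exact h2.comp h1
  have key : (∫ p : ℝ × ℝ, Complex.exp (Complex.I * s * p.1 + Complex.I * t * p.2) * φ p)
      = 𝓕 (⇑ψ) ξ := by
    rw [Real.fourier_eq']
    rw [← mpL.integral_comp (L.toHomeomorph.measurableEmbedding)
      (fun p : ℝ × ℝ => Complex.exp (Complex.I * s * p.1 + Complex.I * t * p.2) * φ p)]
    apply integral_congr_ae
    filter_upwards with v
    have hinner : (inner ℝ v ξ : ℝ) = v 0 * (-(s / (2 * π))) + v 1 * (-(t / (2 * π))) := by
      simp [PiLp.inner_apply, Fin.sum_univ_two, hξ0, hξ1]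
      ring
    have hψv : ψ v = φ (L v) := rfl
    have hLv : L v = (v 0, v 1) := rfl
    rw [smul_eq_mul, hψv, hLv, hinner]
    congr 1
    have h2π : -2 * π * (v 0 * (-(s / (2 * π))) + v 1 * (-(t / (2 * π)))) = s * v 0 + t * v 1 := by
      field_simp
      ring
    rw [h2π]
    push_cast
    ring
  have hnorm : ‖ξ‖ = Real.sqrt ((s / (2 * π)) ^ 2 + (t / (2 * π)) ^ 2) := by
    rw [EuclideanSpace.norm_eq]
    simp [Fin.sum_univ_two, hξ0, hξ1, Real.norm_eq_abs, sq_abs]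
  have hle : (s + t) / (4 * π) ≤ ‖ξ‖ := by
    rw [hnorm]
    have hab : (s + t) / (4 * π) = (s / (2 * π) + t / (2 * π)) / 2 := by
      rw [← add_div, div_div]
      congr 1
      ring
    rw [hab]
    apply Real.le_sqrt_of_sq_le
    have hA : 0 ≤ s / (2 * π) := by positivity
    have hB : 0 ≤ t / (2 * π) := by positivity
    nlinarith [sq_nonneg (s / (2 * π) - t / (2 * π))]
  have hfin : ‖𝓕 (⇑ψ) ξ‖ * (1 + s + t) ^ k ≤ (4 * π) ^ k * D0 := by
    have hχξ : 𝓕 (⇑ψ) ξ = χ ξ := rfl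
    have h2 : s + t ≤ 4 * π * ‖ξ‖ := by
      rw [div_le_iff₀ (by positivity)] at hle
      linarith
    have h1 : (1 + s + t) ≤ (4 * π) * (1 + ‖ξ‖) := by
      nlinarith [Real.pi_gt_three]
    have h3 : (1 + s + t) ^ k ≤ ((4 * π) * (1 + ‖ξ‖)) ^ k :=
      pow_le_pow_left₀ (by positivity) h1 k
    calc ‖𝓕 (⇑ψ) ξ‖ * (1 + s + t) ^ k
        ≤ ‖χ ξ‖ * ((4 * π) * (1 + ‖ξ‖)) ^ k := by
          rw [hχξ]
          exact mul_le_mul_of_nonneg_left h3 (norm_nonneg _)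
      _ = (4 * π) ^ k * ((1 + ‖ξ‖) ^ k * ‖χ ξ‖) := by rw [mul_pow]; ring
      _ ≤ (4 * π) ^ k * D0 := mul_le_mul_of_nonneg_left (hbd ξ) (by positivity)
  rw [key, ← div_eq_mul_inv, le_div_iff₀ (by positivity)]
  exact hfin

lemma weight_summable (h hb a : ℕ → ℝ) (hh : ∀ n, 0 ≤ h n) (hhb : ∀ n, 0 ≤ hb n)
    (ha : ∀ n, 0 ≤ a n) (C α : ℝ) (hC : 0 < C) (hα : 0 ≤ α)
    (hsum : ∀ r ∈ Set.Ico (0:ℝ) 1, ∀ rb ∈ Set.Ico (0:ℝ) 1,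
      Summable (fun n => a n * r ^ h n * rb ^ hb n) ∧
      ∑' n, a n * r ^ h n * rb ^ hb n ≤ C * (1 - r) ^ (-α) * (1 - rb) ^ (-α))
    (k : ℕ) (hk : 2 * α + 2 ≤ (k : ℝ)) :
    Summable (fun n => a n * ((1 + h n + hb n) ^ k)⁻¹) := by
  set x : ℕ → ℝ := fun n => h n + hb n with hxdef
  have hx : ∀ n, 0 ≤ x n := fun n => add_nonneg (hh n) (hhb n)
  set E2k : ℝ := Real.exp 1 * 2 ^ k with hE2k
  have hE2kpos : 0 < E2k := by positivity
  set g : ℕ → ℕ → ℝ := fun m n =>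
    E2k * (((m : ℝ) + 1) ^ k)⁻¹ * (a n * Real.exp (-(x n / ((m : ℝ) + 1)))) with hgdef
  -- pointwise domination
  have pointwise : ∀ n, a n * ((1 + x n) ^ k)⁻¹ ≤ g (⌈x n⌉₊) n := by
    intro n
    set m : ℕ := ⌈x n⌉₊ with hm
    have h1 : (m : ℝ) + 1 ≤ 2 * (1 + x n) := by
      have := Nat.ceil_lt_add_one (hx n)
      have h2 : (m : ℝ) < x n + 1 := by exact_mod_cast this
      have hxn := hx n
      linarith
    have h2 : ((m : ℝ) + 1) ^ k ≤ (2 * (1 + x n)) ^ k :=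
      pow_le_pow_left₀ (by positivity) h1 k
    have h3 : Real.exp (-1) ≤ Real.exp (-(x n / ((m : ℝ) + 1))) := by
      apply Real.exp_le_exp.2
      apply neg_le_neg
      rw [div_le_one (by positivity)]
      exact (Nat.le_ceil (x n)).trans (by rw [← hm]; linarith)
    have key : ((1 + x n) ^ k)⁻¹ ≤ E2k * (((m : ℝ) + 1) ^ k)⁻¹ *
        Real.exp (-(x n / ((m : ℝ) + 1))) := by
      have e4 : Real.exp 1 * Real.exp (-1) = 1 := by
        rw [← Real.exp_add]; norm_num
      have e1 : E2k * ((2 * (1 + x n)) ^ k)⁻¹ * Real.exp (-1) = ((1 + x n) ^ k)⁻¹ := by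
        rw [hE2k, mul_pow, mul_inv]
        calc Real.exp 1 * 2 ^ k * (((2:ℝ) ^ k)⁻¹ * ((1 + x n) ^ k)⁻¹) * Real.exp (-1)
            = (Real.exp 1 * Real.exp (-1)) * ((2:ℝ) ^ k * ((2:ℝ) ^ k)⁻¹) *
              ((1 + x n) ^ k)⁻¹ := by ring
          _ = ((1 + x n) ^ k)⁻¹ := by
              rw [e4, mul_inv_cancel₀ (by positivity : ((2:ℝ) ^ k) ≠ 0)]
              ring
      rw [← e1]
      gcongr
    calc a n * ((1 + x n) ^ k)⁻¹
        ≤ a n * (E2k * (((m : ℝ) + 1) ^ k)⁻¹ * Real.exp (-(x n / ((m : ℝ) + 1)))) :=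
          mul_le_mul_of_nonneg_left key (ha n)
      _ = g m n := by simp only [hgdef]; ring
  -- the ENNReal bound
  have hne : (∑' n, ENNReal.ofReal (a n * ((1 + x n) ^ k)⁻¹)) ≠ ⊤ := by
    have step1 : ∀ n, ENNReal.ofReal (a n * ((1 + x n) ^ k)⁻¹) ≤
        ∑' m, ENNReal.ofReal (g m n) :=
      fun n => le_trans (ENNReal.ofReal_le_ofReal (pointwise n)) (ENNReal.le_tsum ⌈x n⌉₊)
    have step2 : (∑' n, ENNReal.ofReal (a n * ((1 + x n) ^ k)⁻¹)) ≤
        ∑' m, ∑' n, ENNReal.ofReal (g m n) :=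
      le_trans (ENNReal.tsum_le_tsum step1) (le_of_eq ENNReal.tsum_comm)
    set bnd : ℕ → ℝ := fun m => E2k * (((m : ℝ) + 1) ^ k)⁻¹ *
      (C * (2 * ((m : ℝ) + 1)) ^ α * (2 * ((m : ℝ) + 1)) ^ α) with hbnd
    have inner : ∀ m : ℕ, (∑' n, ENNReal.ofReal (g m n)) ≤ ENNReal.ofReal (bnd m) := by
      intro m
      set M : ℝ := (m : ℝ) + 1 with hM
      have hMpos : (0:ℝ) < M := by positivity
      have hM1 : (1:ℝ) ≤ M := by rw [hM]; exact le_add_of_nonneg_left (Nat.cast_nonneg m)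
      set r : ℝ := Real.exp (-(1 / M)) with hr
      have hrpos : 0 < r := Real.exp_pos _
      have hrlt1 : r < 1 := by
        have : Real.exp (-(1 / M)) < Real.exp 0 :=
          Real.exp_lt_exp.2 (neg_lt_zero.2 (by positivity))
        rwa [Real.exp_zero] at this
      have hrmem : r ∈ Set.Ico (0:ℝ) 1 := ⟨hrpos.le, hrlt1⟩
      obtain ⟨hS, hSle⟩ := hsum r hrmem r hrmem
      have hexp : ∀ n, Real.exp (-(x n / M)) = r ^ h n * r ^ hb n := by
        intro n
        rw [hr, ← Real.exp_mul, ← Real.exp_mul, ← Real.exp_add]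
        congr 1
        simp only [hxdef]
        ring
      have hgr : ∀ n, g m n = (E2k * (M ^ k)⁻¹) * (a n * r ^ h n * r ^ hb n) := by
        intro n
        simp only [hgdef]
        rw [← hM, hexp n]
        ring
      have hcst : 0 ≤ E2k * (M ^ k)⁻¹ := by positivity
      have hterm_nonneg : ∀ n, 0 ≤ (E2k * (M ^ k)⁻¹) * (a n * r ^ h n * r ^ hb n) := by
        intro n
        exact mul_nonneg hcst (mul_nonneg (mul_nonneg (ha n)
          (Real.rpow_nonneg hrpos.le (h n))) (Real.rpow_nonneg hrpos.le (hb n)))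
      have hsummul : Summable (fun n => (E2k * (M ^ k)⁻¹) * (a n * r ^ h n * r ^ hb n)) :=
        hS.mul_left _
      have e5 : (∑' n, ENNReal.ofReal (g m n)) =
          ENNReal.ofReal (∑' n, (E2k * (M ^ k)⁻¹) * (a n * r ^ h n * r ^ hb n)) := by
        rw [ENNReal.ofReal_tsum_of_nonneg hterm_nonneg hsummul]
        exact tsum_congr fun n => by rw [hgr n]
      rw [e5]
      apply ENNReal.ofReal_le_ofReal
      rw [tsum_mul_left]
      have h1r : 1 / (2 * M) ≤ 1 - r := by
        have hexp_ge : 1 + 1 / M ≤ Real.exp (1 / M) := by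
          have := Real.add_one_le_exp (1 / M)
          linarith
        have hrle : r ≤ (1 + 1 / M)⁻¹ := by
          rw [hr, Real.exp_neg]
          gcongr
        have e6 : (1 + 1 / M)⁻¹ = M / (M + 1) := by
          rw [inv_eq_one_div]
          rw [div_eq_div_iff (by positivity) (by positivity)]
          field_simp
        have e7 : 1 - M / (M + 1) = 1 / (M + 1) := by
          rw [eq_div_iff (by positivity)]
          field_simp
          ring
        have e8 : 1 / (2 * M) ≤ 1 / (M + 1) :=
          one_div_le_one_div_of_le (by positivity) (by linarith)
        rw [e6] at hrle
        linarith [e7, e8]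
      have h2r : (1 - r) ^ (-α) ≤ (2 * M) ^ α := by
        have hhalf : (0:ℝ) < 1 / (2 * M) := by positivity
        have := Real.rpow_le_rpow_of_nonpos hhalf h1r (neg_nonpos.2 hα)
        calc (1 - r) ^ (-α) ≤ (1 / (2 * M)) ^ (-α) := this
          _ = (2 * M) ^ α := by
              rw [one_div, Real.inv_rpow (by positivity), ← Real.rpow_neg (by positivity),
                neg_neg]
      have hbase0 : (0:ℝ) ≤ (1 - r) ^ (-α) := Real.rpow_nonneg (by linarith) _
      have h3r : C * (1 - r) ^ (-α) * (1 - r) ^ (-α) ≤ C * (2 * M) ^ α * (2 * M) ^ α := by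
        have := mul_le_mul (mul_le_mul_of_nonneg_left h2r hC.le) h2r hbase0
          (by positivity)
        exact this
      have e9 : bnd m = E2k * (M ^ k)⁻¹ * (C * (2 * M) ^ α * (2 * M) ^ α) := by
        simp only [hbnd, hM]
      rw [e9]
      exact mul_le_mul_of_nonneg_left (hSle.trans h3r) hcst
    have hbnd_sum : Summable bnd := by
      set K : ℝ := E2k * C * 2 ^ α * 2 ^ α with hK
      have hKpos : 0 < K := by positivity
      have hbnd_le : ∀ m : ℕ, bnd m ≤ K * ((m : ℝ) + 1) ^ (-2 : ℝ) := by
        intro m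
        have hMpos : (0:ℝ) < (m : ℝ) + 1 := by positivity
        have hM1 : (1:ℝ) ≤ (m : ℝ) + 1 := le_add_of_nonneg_left (Nat.cast_nonneg m)
        have e1 : (2 * ((m : ℝ) + 1)) ^ α = 2 ^ α * ((m : ℝ) + 1) ^ α :=
          Real.mul_rpow (by norm_num) hMpos.le
        have e2 : ((m : ℝ) + 1) ^ α * ((m : ℝ) + 1) ^ α * (((((m : ℝ) + 1)) ^ k)⁻¹) ≤
            ((m : ℝ) + 1) ^ (-2 : ℝ) := by
          rw [← Real.rpow_natCast ((m : ℝ) + 1) k, ← Real.rpow_neg hMpos.le,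
            ← Real.rpow_add hMpos, ← Real.rpow_add hMpos]
          exact Real.rpow_le_rpow_of_exponent_le hM1 (by linarith)
        have e3 : bnd m = K * (((m : ℝ) + 1) ^ α * ((m : ℝ) + 1) ^ α *
            (((((m : ℝ) + 1)) ^ k)⁻¹)) := by
          simp only [hbnd, hK, e1]
          ring
        rw [e3]
        exact mul_le_mul_of_nonneg_left e2 hKpos.le
      have hs2 : Summable (fun m : ℕ => K * ((m : ℝ) + 1) ^ (-2 : ℝ)) := by
        apply Summable.mul_left
        have hbase : Summable (fun m : ℕ => ((m : ℝ)) ^ (-2 : ℝ)) :=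
          Real.summable_nat_rpow.2 (by norm_num)
        have := hbase.comp_injective (add_left_injective 1)
        apply this.congr
        intro m
        simp only [Function.comp_apply]
        push_cast
        ring_nf
      apply Summable.of_nonneg_of_le (fun m => by positivity) hbnd_le hs2
    have final : (∑' m, ∑' n, ENNReal.ofReal (g m n)) ≠ ⊤ := by
      apply ne_of_lt
      apply lt_of_le_of_lt (ENNReal.tsum_le_tsum inner)
      rw [← ENNReal.ofReal_tsum_of_nonneg (fun m => by simp only [hbnd]; positivity) hbnd_sum]
      exact ENNReal.ofReal_lt_top
    exact ne_of_lt (lt_of_le_of_lt step2 (lt_top_iff_ne_top.2 final))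
  have hsummable := ENNReal.summable_toReal hne
  apply hsummable.congr
  intro n
  rw [ENNReal.toReal_ofReal (mul_nonneg (ha n)
    (inv_nonneg.2 (pow_nonneg (by linarith [hx n]) k)))]
  simp only [hxdef]
  ring

end CBAux

theorem cb_expansion_boundary_distributional_convergence_2d
    (h hb a : ℕ → ℝ) (hh : ∀ n, 0 ≤ h n) (hhb : ∀ n, 0 ≤ hb n) (ha : ∀ n, 0 ≤ a n)
    (C α : ℝ) (hC : 0 < C) (hα : 0 ≤ α)
    (hsum : ∀ r ∈ Set.Ico (0:ℝ) 1, ∀ rb ∈ Set.Ico (0:ℝ) 1,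
      Summable (fun n => a n * r ^ h n * rb ^ hb n) ∧
      ∑' n, a n * r ^ h n * rb ^ hb n ≤ C * (1 - r) ^ (-α) * (1 - rb) ^ (-α))
    (φ : SchwartzMap (ℝ × ℝ) ℂ) :
    Summable (fun n => (a n : ℂ) *
        ∫ p : ℝ × ℝ,
          Complex.exp (Complex.I * (h n : ℂ) * (p.1 : ℂ) +
            Complex.I * (hb n : ℂ) * (p.2 : ℂ)) * φ p) ∧
    Tendsto (fun r : ℝ × ℝ =>
        ∫ p : ℝ × ℝ,
          (∑' n, ((a n * r.1 ^ h n * r.2 ^ hb n : ℝ) : ℂ) *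
            Complex.exp (Complex.I * (h n : ℂ) * (p.1 : ℂ) +
              Complex.I * (hb n : ℂ) * (p.2 : ℂ))) * φ p)
      ((nhdsWithin 1 (Set.Iio 1)) ×ˢ (nhdsWithin 1 (Set.Iio 1)))
      (nhds (∑' n, (a n : ℂ) *
        ∫ p : ℝ × ℝ,
          Complex.exp (Complex.I * (h n : ℂ) * (p.1 : ℂ) +
            Complex.I * (hb n : ℂ) * (p.2 : ℂ)) * φ p)) := by
  set k : ℕ := ⌈2 * α⌉₊ + 2 with hkdef
  have hkα : 2 * α + 2 ≤ (k : ℝ) := by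
    have h1 := Nat.le_ceil (2 * α)
    have h2 : (k : ℝ) = ((⌈2 * α⌉₊ : ℕ) : ℝ) + 2 := by
      rw [hkdef]; push_cast; ring
    linarith
  obtain ⟨D, hD, hFdec⟩ := CBAux.fourier_decay φ k
  set F : ℕ → ℂ := fun n => ∫ p : ℝ × ℝ,
    Complex.exp (Complex.I * (h n : ℂ) * (p.1 : ℂ) +
      Complex.I * (hb n : ℂ) * (p.2 : ℂ)) * φ p with hFdef
  have hFbound : ∀ n, ‖F n‖ ≤ D * ((1 + h n + hb n) ^ k)⁻¹ := fun n =>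
    hFdec (h n) (hb n) (hh n) (hhb n)
  have hws := CBAux.weight_summable h hb a hh hhb ha C α hC hα hsum k hkα
  have hbound_sum : Summable (fun n => a n * ‖F n‖) := by
    apply Summable.of_nonneg_of_le (fun n => mul_nonneg (ha n) (norm_nonneg _))
      (fun n => ?_) (hws.mul_left D)
    calc a n * ‖F n‖ ≤ a n * (D * ((1 + h n + hb n) ^ k)⁻¹) :=
          mul_le_mul_of_nonneg_left (hFbound n) (ha n)
      _ = D * (a n * ((1 + h n + hb n) ^ k)⁻¹) := by ring
  have hnormeq : ∀ n, ‖(a n : ℂ) * F n‖ = a n * ‖F n‖ := by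
    intro n
    rw [norm_mul, Complex.norm_real, Real.norm_eq_abs, _root_.abs_of_nonneg (ha n)]
  have part1 : Summable (fun n => (a n : ℂ) * F n) := by
    apply Summable.of_norm_bounded hbound_sum
    intro n
    exact le_of_eq (hnormeq n)
  refine ⟨part1, ?_⟩
  set l := (nhdsWithin (1:ℝ) (Set.Iio 1)) ×ˢ (nhdsWithin (1:ℝ) (Set.Iio 1)) with hl
  have hev1 : ∀ᶠ u : ℝ in nhdsWithin 1 (Set.Iio 1), u ∈ Set.Ioo (0:ℝ) 1 := by
    have hmem : Set.Ioi (0:ℝ) ∩ Set.Iio 1 ∈ nhdsWithin (1:ℝ) (Set.Iio 1) :=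
      Filter.inter_mem (mem_nhdsWithin_of_mem_nhds (Ioi_mem_nhds one_pos)) self_mem_nhdsWithin
    filter_upwards [hmem] with u hu
    exact ⟨hu.1, hu.2⟩
  have hev : ∀ᶠ r : ℝ × ℝ in l, r.1 ∈ Set.Ioo (0:ℝ) 1 ∧ r.2 ∈ Set.Ioo (0:ℝ) 1 :=
    hev1.prod_mk hev1
  have hGtendsto : Tendsto
      (fun r : ℝ × ℝ => ∑' n, ((a n * r.1 ^ h n * r.2 ^ hb n : ℝ) : ℂ) * F n) l
      (𝓝 (∑' n, (a n : ℂ) * F n)) := by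
    apply tendsto_tsum_of_dominated_convergence hbound_sum
    · intro n
      have t1 : Tendsto (fun r : ℝ × ℝ => r.1 ^ h n) l (𝓝 1) := by
        have hc : ContinuousAt (fun u : ℝ => u ^ h n) 1 :=
          Real.continuousAt_rpow_const 1 (h n) (Or.inl one_ne_zero)
        have hfst : Tendsto (fun r : ℝ × ℝ => r.1) l (𝓝 1) :=
          tendsto_fst.mono_right nhdsWithin_le_nhds
        have := hc.tendsto.comp hfst
        simpa [Real.one_rpow, Function.comp_def] using this
      have t2 : Tendsto (fun r : ℝ × ℝ => r.2 ^ hb n) l (𝓝 1) := by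
        have hc : ContinuousAt (fun u : ℝ => u ^ hb n) 1 :=
          Real.continuousAt_rpow_const 1 (hb n) (Or.inl one_ne_zero)
        have hsnd : Tendsto (fun r : ℝ × ℝ => r.2) l (𝓝 1) :=
          tendsto_snd.mono_right nhdsWithin_le_nhds
        have := hc.tendsto.comp hsnd
        simpa [Real.one_rpow, Function.comp_def] using this
      have treal : Tendsto (fun r : ℝ × ℝ => a n * r.1 ^ h n * r.2 ^ hb n) l (𝓝 (a n)) := by
        have := ((tendsto_const_nhds (x := a n)).mul t1).mul t2
        simpa using this
      have tc : Tendsto (fun r : ℝ × ℝ => ((a n * r.1 ^ h n * r.2 ^ hb n : ℝ) : ℂ)) l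
          (𝓝 ((a n : ℝ) : ℂ)) := (Complex.continuous_ofReal.tendsto (a n)).comp treal
      exact tc.mul_const (F n)
    · filter_upwards [hev] with r hr n
      have h01 : 0 ≤ r.1 ^ h n := Real.rpow_nonneg hr.1.1.le _
      have h02 : 0 ≤ r.2 ^ hb n := Real.rpow_nonneg hr.2.1.le _
      have hle1 : r.1 ^ h n ≤ 1 := Real.rpow_le_one hr.1.1.le hr.1.2.le (hh n)
      have hle2 : r.2 ^ hb n ≤ 1 := Real.rpow_le_one hr.2.1.le hr.2.2.le (hhb n)
      have hnn : 0 ≤ a n * r.1 ^ h n * r.2 ^ hb n := mul_nonneg (mul_nonneg (ha n) h01) h02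
      have habs : a n * r.1 ^ h n * r.2 ^ hb n ≤ a n := by
        calc a n * r.1 ^ h n * r.2 ^ hb n ≤ a n * r.1 ^ h n * 1 :=
              mul_le_mul_of_nonneg_left hle2 (mul_nonneg (ha n) h01)
          _ = a n * r.1 ^ h n := mul_one _
          _ ≤ a n * 1 := mul_le_mul_of_nonneg_left hle1 (ha n)
          _ = a n := mul_one _
      calc ‖((a n * r.1 ^ h n * r.2 ^ hb n : ℝ) : ℂ) * F n‖
          = (a n * r.1 ^ h n * r.2 ^ hb n) * ‖F n‖ := by
            rw [norm_mul, Complex.norm_real, Real.norm_eq_abs, _root_.abs_of_nonneg hnn]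
        _ ≤ a n * ‖F n‖ := mul_le_mul_of_nonneg_right habs (norm_nonneg _)
  have heq : (fun r : ℝ × ℝ => ∫ p : ℝ × ℝ,
        (∑' n, ((a n * r.1 ^ h n * r.2 ^ hb n : ℝ) : ℂ) *
          Complex.exp (Complex.I * (h n : ℂ) * (p.1 : ℂ) +
            Complex.I * (hb n : ℂ) * (p.2 : ℂ))) * φ p)
      =ᶠ[l] (fun r : ℝ × ℝ => ∑' n, ((a n * r.1 ^ h n * r.2 ^ hb n : ℝ) : ℂ) * F n) := by
    filter_upwards [hev] with r hr
    obtain ⟨hS, -⟩ := hsum r.1 ⟨hr.1.1.le, hr.1.2⟩ r.2 ⟨hr.2.1.le, hr.2.2⟩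
    have hcc0 : ∀ n, 0 ≤ a n * r.1 ^ h n * r.2 ^ hb n := fun n =>
      mul_nonneg (mul_nonneg (ha n) (Real.rpow_nonneg hr.1.1.le _))
        (Real.rpow_nonneg hr.2.1.le _)
    have he_cont : ∀ n : ℕ, Continuous (fun p : ℝ × ℝ =>
        Complex.exp (Complex.I * (h n : ℂ) * (p.1 : ℂ) +
          Complex.I * (hb n : ℂ) * (p.2 : ℂ))) := by
      intro n
      apply Complex.continuous_exp.comp
      apply Continuous.add
      · exact continuous_const.mul (Complex.continuous_ofReal.comp continuous_fst)
      · exact continuous_const.mul (Complex.continuous_ofReal.comp continuous_snd)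
    have he_norm : ∀ (n : ℕ) (p : ℝ × ℝ),
        ‖Complex.exp (Complex.I * (h n : ℂ) * (p.1 : ℂ) +
          Complex.I * (hb n : ℂ) * (p.2 : ℂ))‖ = 1 := by
      intro n p
      rw [Complex.norm_exp]
      have hre : (Complex.I * (h n : ℂ) * (p.1 : ℂ) +
          Complex.I * (hb n : ℂ) * (p.2 : ℂ)).re = 0 := by
        simp
      rw [hre, Real.exp_zero]
    have hmeas : ∀ n, AEStronglyMeasurable (fun p : ℝ × ℝ =>
        (((a n * r.1 ^ h n * r.2 ^ hb n : ℝ) : ℂ) *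
          Complex.exp (Complex.I * (h n : ℂ) * (p.1 : ℂ) +
            Complex.I * (hb n : ℂ) * (p.2 : ℂ))) * φ p) volume := fun n =>
      ((continuous_const.mul (he_cont n)).mul φ.continuous).aestronglyMeasurable
    have hlint : ∀ n, (∫⁻ p : ℝ × ℝ, ‖(((a n * r.1 ^ h n * r.2 ^ hb n : ℝ) : ℂ) *
          Complex.exp (Complex.I * (h n : ℂ) * (p.1 : ℂ) +
            Complex.I * (hb n : ℂ) * (p.2 : ℂ))) * φ p‖₊) =
        ENNReal.ofReal (a n * r.1 ^ h n * r.2 ^ hb n) * ∫⁻ p : ℝ × ℝ, ‖φ p‖₊ := by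
      intro n
      rw [← lintegral_const_mul _ (φ.continuous.measurable.nnnorm.coe_nnreal_ennreal)]
      apply lintegral_congr
      intro p
      have hc : ∀ z : ℂ, ((‖z‖₊ : NNReal) : ENNReal) = ENNReal.ofReal ‖z‖ := fun z => (ofReal_norm z).symm
      rw [hc, hc, norm_mul, norm_mul,
        Complex.norm_real, Real.norm_eq_abs, _root_.abs_of_nonneg (hcc0 n), he_norm n p, mul_one,
        ENNReal.ofReal_mul (hcc0 n)]
    have hint_ne : (∑' n, ∫⁻ p : ℝ × ℝ, ‖(((a n * r.1 ^ h n * r.2 ^ hb n : ℝ) : ℂ) *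
          Complex.exp (Complex.I * (h n : ℂ) * (p.1 : ℂ) +
            Complex.I * (hb n : ℂ) * (p.2 : ℂ))) * φ p‖₊) ≠ ⊤ := by
      have e1 : (∑' n, ∫⁻ p : ℝ × ℝ, ‖(((a n * r.1 ^ h n * r.2 ^ hb n : ℝ) : ℂ) *
            Complex.exp (Complex.I * (h n : ℂ) * (p.1 : ℂ) +
              Complex.I * (hb n : ℂ) * (p.2 : ℂ))) * φ p‖₊) =
          (∑' n, ENNReal.ofReal (a n * r.1 ^ h n * r.2 ^ hb n)) * ∫⁻ p : ℝ × ℝ, ‖φ p‖₊ := by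
        rw [← ENNReal.tsum_mul_right]
        exact tsum_congr hlint
      rw [e1, ← ENNReal.ofReal_tsum_of_nonneg hcc0 hS]
      exact ENNReal.mul_ne_top ENNReal.ofReal_ne_top (lt_top_iff_ne_top.1 φ.integrable.2)
    have hswap := MeasureTheory.integral_tsum hmeas hint_ne
    calc (∫ p : ℝ × ℝ, (∑' n, ((a n * r.1 ^ h n * r.2 ^ hb n : ℝ) : ℂ) *
          Complex.exp (Complex.I * (h n : ℂ) * (p.1 : ℂ) +
            Complex.I * (hb n : ℂ) * (p.2 : ℂ))) * φ p)
        = ∫ p : ℝ × ℝ, ∑' n, (((a n * r.1 ^ h n * r.2 ^ hb n : ℝ) : ℂ) *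
            Complex.exp (Complex.I * (h n : ℂ) * (p.1 : ℂ) +
              Complex.I * (hb n : ℂ) * (p.2 : ℂ))) * φ p := by
          apply integral_congr_ae
          filter_upwards with p
          exact (tsum_mul_right).symm
      _ = ∑' n, ∫ p : ℝ × ℝ, (((a n * r.1 ^ h n * r.2 ^ hb n : ℝ) : ℂ) *
            Complex.exp (Complex.I * (h n : ℂ) * (p.1 : ℂ) +
              Complex.I * (hb n : ℂ) * (p.2 : ℂ))) * φ p := hswap
      _ = ∑' n, ((a n * r.1 ^ h n * r.2 ^ hb n : ℝ) : ℂ) * F n := by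
          apply tsum_congr
          intro n
          have e2 : (fun p : ℝ × ℝ => (((a n * r.1 ^ h n * r.2 ^ hb n : ℝ) : ℂ) *
              Complex.exp (Complex.I * (h n : ℂ) * (p.1 : ℂ) +
                Complex.I * (hb n : ℂ) * (p.2 : ℂ))) * φ p) =
              (fun p : ℝ × ℝ => ((a n * r.1 ^ h n * r.2 ^ hb n : ℝ) : ℂ) *
              (Complex.exp (Complex.I * (h n : ℂ) * (p.1 : ℂ) +
                Complex.I * (hb n : ℂ) * (p.2 : ℂ)) * φ p)) :=
            funext fun p => mul_assoc _ _ _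
          rw [e2, MeasureTheory.integral_const_mul]
  exact hGtendsto.congr' heq.symm
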